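/- Let p and q be harmonic polynomials on ℝ^m, homogeneous of degree k. Then ∫_{S^{m-1}} ∇p · ∇q dH^{m-1} = k(m + 2k − 2) ∫_{S^{m-1}} p q dH^{m-1}. -/

import Mathlib

open MeasureTheory Metric MvPolynomial Finset Real
open scoped NNReal ENNReal

namespace Stmt11Aux

variable {m : ℕ}

lemma pderiv_comm' (i j : Fin m) (F : MvPolynomial (Fin m) ℝ) :
    pderiv i (pderiv j F) = pderiv j (pderiv i F) := by
  induction F using MvPolynomial.induction_on' with
  | add p q hp hq => simp [hp, hq]
  | monomial s a =>
    simp only [pderiv_monomial]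
    rcases eq_or_ne i j with rfl | hij
    · rfl
    · congr 1
      · rw [tsub_tsub, tsub_tsub, add_comm]
      · rw [Finsupp.tsub_apply, Finsupp.tsub_apply,
          Finsupp.single_apply, Finsupp.single_apply]
        simp [hij, hij.symm]
        ring

lemma euler_monomial (i : Fin m) (s : Fin m →₀ ℕ) (a : ℝ) :
    X i * pderiv i (monomial s a) = C ((s i : ℝ)) * monomial s a := by
  rw [pderiv_monomial]
  rcases Nat.eq_zero_or_pos (s i) with h | h
  · simp [h]
  · have hle : Finsupp.single i 1 ≤ s := by
      rw [Finsupp.single_le_iff]; exact h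
    rw [X, monomial_mul, C_mul_monomial, add_tsub_cancel_of_le hle]
    ring_nf

lemma euler {k : ℕ} {P : MvPolynomial (Fin m) ℝ} (h : P.IsHomogeneous k) :
    ∑ i : Fin m, X i * pderiv i P = C ((k : ℝ)) * P := by
  conv_lhs => rw [P.as_sum]
  conv_rhs => rw [P.as_sum]
  rw [Finset.mul_sum]
  have : ∀ i : Fin m, X (R := ℝ) i * pderiv i (∑ s ∈ P.support, monomial s (coeff s P))
      = ∑ s ∈ P.support, C ((s i : ℝ)) * monomial s (coeff s P) := by
    intro i
    rw [map_sum, Finset.mul_sum]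
    exact Finset.sum_congr rfl fun s _ => euler_monomial i s _
  simp only [this]
  rw [Finset.sum_comm]
  refine Finset.sum_congr rfl fun s hs => ?_
  rw [← Finset.sum_mul, ← map_sum C]
  congr 2
  have hdeg : (Finsupp.weight 1) s = k := h (mem_support_iff.mp hs)
  have hdeg' : ∑ i ∈ s.support, s i = k := by
    rw [← hdeg, Finsupp.weight_apply, Finsupp.sum]
    simp [smul_eq_mul]
  have : ∑ i : Fin m, (s i : ℝ) = ((∑ i : Fin m, s i : ℕ) : ℝ) := by push_cast; ring
  rw [this]
  congr 1
  rw [← hdeg']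
  exact (Finset.sum_subset (Finset.subset_univ _) (fun x _ hx => Finsupp.notMem_support_iff.mp hx)).symm


/-- The angular momentum operator. -/
noncomputable def LL (i j : Fin m) (F : MvPolynomial (Fin m) ℝ) : MvPolynomial (Fin m) ℝ :=
  X i * pderiv j F - X j * pderiv i F

lemma LL_mul (i j : Fin m) (F G : MvPolynomial (Fin m) ℝ) :
    LL i j (F * G) = LL i j F * G + F * LL i j G := by
  simp only [LL, pderiv_mul]; ring

lemma claim1 (P Q : MvPolynomial (Fin m) ℝ) :
    ∑ i : Fin m, ∑ j : Fin m, LL i j P * LL i j Q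
      = 2 * (∑ i : Fin m, X i ^ 2) * (∑ i : Fin m, pderiv i P * pderiv i Q)
        - 2 * (∑ i : Fin m, X i * pderiv i P) * (∑ i : Fin m, X i * pderiv i Q) := by
  have expand : ∀ i j : Fin m, LL i j P * LL i j Q
      = (X i ^ 2 * (pderiv j P * pderiv j Q) + X j ^ 2 * (pderiv i P * pderiv i Q))
        - ((X i * pderiv i P) * (X j * pderiv j Q) + (X j * pderiv j P) * (X i * pderiv i Q)) := by
    intro i j; simp only [LL]; ring
  simp only [expand, Finset.sum_add_distrib, Finset.sum_sub_distrib]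
  have h1 : ∑ i : Fin m, ∑ j : Fin m, X (R := ℝ) i ^ 2 * (pderiv j P * pderiv j Q)
      = (∑ i : Fin m, X i ^ 2) * (∑ i : Fin m, pderiv i P * pderiv i Q) := by
    rw [Finset.sum_mul_sum]
  have h2 : ∑ i : Fin m, ∑ j : Fin m, X (R := ℝ) j ^ 2 * (pderiv i P * pderiv i Q)
      = (∑ i : Fin m, X i ^ 2) * (∑ i : Fin m, pderiv i P * pderiv i Q) := by
    rw [Finset.sum_comm, Finset.sum_mul_sum]
  have h3 : ∑ i : Fin m, ∑ j : Fin m, (X (R := ℝ) i * pderiv i P) * (X j * pderiv j Q)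
      = (∑ i : Fin m, X i * pderiv i P) * (∑ i : Fin m, X i * pderiv i Q) := by
    rw [Finset.sum_mul_sum]
  have h4 : ∑ i : Fin m, ∑ j : Fin m, (X (R := ℝ) j * pderiv j P) * (X i * pderiv i Q)
      = (∑ i : Fin m, X i * pderiv i P) * (∑ i : Fin m, X i * pderiv i Q) := by
    rw [Finset.sum_comm, Finset.sum_mul_sum]
  rw [h1, h2, h3, h4]
  ring

lemma pderiv_X_mul (i j : Fin m) (F : MvPolynomial (Fin m) ℝ) :
    pderiv i (X j * F) = (if i = j then F else 0) + X j * pderiv i F := by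
  rw [pderiv_mul, pderiv_X]
  rcases eq_or_ne i j with rfl | hij
  · simp
  · simp [Pi.single_apply, hij.symm, hij]

lemma LLsq (i j : Fin m) (Q : MvPolynomial (Fin m) ℝ) (hij : i ≠ j) :
    LL i j (LL i j Q)
      = X i ^ 2 * pderiv j (pderiv j Q) + X j ^ 2 * pderiv i (pderiv i Q)
        - X i * pderiv i Q - X j * pderiv j Q
        - 2 * (X i * X j) * pderiv i (pderiv j Q) := by
  simp only [LL, map_sub, pderiv_X_mul, if_neg hij, if_neg hij.symm, if_pos rfl, if_true]
  rw [pderiv_comm' j i Q]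
  ring

lemma sum_delta_term (Q : MvPolynomial (Fin m) ℝ) (j : Fin m) :
    ∑ i : Fin m, X (R := ℝ) i * ((if i = j then Q else 0)) = X j * Q := by
  rw [Finset.sum_eq_single j]
  · simp
  · intro b _ hb; simp [hb]
  · simp

lemma S2 (Q : MvPolynomial (Fin m) ℝ) :
    ∑ i : Fin m, X i * pderiv i (∑ j : Fin m, X j * pderiv j Q)
      = (∑ j : Fin m, X j * pderiv j Q)
        + ∑ i : Fin m, ∑ j : Fin m, (X i * X j) * pderiv i (pderiv j Q) := by
  have : ∀ i : Fin m, X (R := ℝ) i * pderiv i (∑ j : Fin m, X j * pderiv j Q)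
      = (X i * pderiv i Q) + ∑ j : Fin m, (X i * X j) * pderiv i (pderiv j Q) := by
    intro i
    rw [map_sum]
    rw [Finset.mul_sum]
    have : ∀ j : Fin m, X (R := ℝ) i * pderiv i (X j * pderiv j Q)
        = X i * (if i = j then pderiv j Q else 0) + (X i * X j) * pderiv i (pderiv j Q) := by
      intro j; rw [pderiv_X_mul]; ring
    simp only [this, Finset.sum_add_distrib]
    congr 1
    rw [Finset.sum_eq_single i]
    · simp
    · intro b _ hb; simp [Ne.symm hb]
    · simp
  simp only [this, Finset.sum_add_distrib]


lemma claim2 {k : ℕ} (Q : MvPolynomial (Fin m) ℝ) (hQhom : Q.IsHomogeneous k)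
    (hQharm : ∑ i : Fin m, pderiv i (pderiv i Q) = 0) :
    ∑ i : Fin m, ∑ j : Fin m, LL i j (LL i j Q)
      = - (C ((2:ℝ) * k * ((m:ℝ) + k - 2)) * Q) := by
  have hE : ∑ j : Fin m, X j * pderiv j Q = C ((k:ℝ)) * Q := euler hQhom
  have hterm : ∀ i j : Fin m, LL i j (LL i j Q)
      = (X i ^ 2 * pderiv j (pderiv j Q) + X j ^ 2 * pderiv i (pderiv i Q)
          - X i * pderiv i Q - X j * pderiv j Q
          - 2 * (X i * X j) * pderiv i (pderiv j Q))
        + (if i = j then 2 * (X i * pderiv i Q) else 0) := by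
    intro i j
    rcases eq_or_ne i j with rfl | hij
    · rw [if_pos rfl]
      simp only [LL, sub_self]
      ring
    · rw [LLsq i j Q hij, if_neg hij]; ring
  simp only [hterm, Finset.sum_add_distrib, Finset.sum_sub_distrib]
  have hdiag : ∑ i : Fin m, ∑ j : Fin m,
      (if i = j then 2 * (X (R := ℝ) i * pderiv i Q) else 0) = 2 * (C ((k:ℝ)) * Q) := by
    have : ∀ i : Fin m, ∑ j : Fin m,
        (if i = j then 2 * (X (R := ℝ) i * pderiv i Q) else 0) = 2 * (X i * pderiv i Q) := by
      intro i
      rw [Finset.sum_eq_single i]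
      · simp
      · intro b _ hb; simp [Ne.symm hb]
      · simp
    simp only [this, ← Finset.mul_sum, hE]
  have h1 : ∑ i : Fin m, ∑ j : Fin m, X (R := ℝ) i ^ 2 * pderiv j (pderiv j Q) = 0 := by
    rw [← Finset.sum_mul_sum, hQharm, mul_zero]
  have h2 : ∑ i : Fin m, ∑ j : Fin m, X (R := ℝ) j ^ 2 * pderiv i (pderiv i Q) = 0 := by
    rw [Finset.sum_comm, ← Finset.sum_mul_sum, hQharm, mul_zero]
  have h3 : ∑ i : Fin m, ∑ j : Fin m, X (R := ℝ) i * pderiv i Q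
      = C ((m:ℝ)) * (C ((k:ℝ)) * Q) := by
    simp only [Finset.sum_const, Finset.card_univ, Fintype.card_fin, smul_sum]
    rw [← hE]
    simp [Finset.smul_sum, nsmul_eq_mul, Finset.mul_sum]
  have h4 : ∑ i : Fin m, ∑ j : Fin m, X (R := ℝ) j * pderiv j Q
      = C ((m:ℝ)) * (C ((k:ℝ)) * Q) := by
    rw [Finset.sum_comm]; exact h3
  have h5 : ∑ i : Fin m, ∑ j : Fin m, 2 * (X (R := ℝ) i * X j) * pderiv i (pderiv j Q)
      = 2 * (C ((k:ℝ)) * (C ((k:ℝ)) * Q) - C ((k:ℝ)) * Q) := by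
    have hS2 := S2 (m := m) Q
    rw [hE] at hS2
    have : ∑ i : Fin m, X (R := ℝ) i * pderiv i (C ((k:ℝ)) * Q)
        = C ((k:ℝ)) * (C ((k:ℝ)) * Q) := by
      simp only [pderiv_C_mul]
      have hcomm : ∀ x : Fin m, X (R := ℝ) x * (C ((k:ℝ)) * pderiv x Q)
          = C ((k:ℝ)) * (X x * pderiv x Q) := fun x => by ring
      simp only [hcomm, ← Finset.mul_sum, hE]
    rw [this] at hS2
    have h6 : ∑ i : Fin m, ∑ j : Fin m, (X (R := ℝ) i * X j) * pderiv i (pderiv j Q)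
        = C ((k:ℝ)) * (C ((k:ℝ)) * Q) - C ((k:ℝ)) * Q := by
      rw [eq_sub_iff_add_eq, add_comm, ← hS2]
    calc ∑ i : Fin m, ∑ j : Fin m, 2 * (X (R := ℝ) i * X j) * pderiv i (pderiv j Q)
        = 2 * ∑ i : Fin m, ∑ j : Fin m, (X (R := ℝ) i * X j) * pderiv i (pderiv j Q) := by
          simp [Finset.mul_sum, mul_assoc]
      _ = _ := by rw [h6]
  rw [hdiag, h1, h2, h3, h4, h5]
  simp only [map_mul, map_sub, map_add, map_ofNat, map_natCast]
  ring

lemma master {k : ℕ} (P Q : MvPolynomial (Fin m) ℝ)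
    (hPhom : P.IsHomogeneous k) (hQhom : Q.IsHomogeneous k)
    (hQharm : ∑ i : Fin m, pderiv i (pderiv i Q) = 0) :
    ∑ i : Fin m, ∑ j : Fin m, LL i j (P * LL i j Q)
      = 2 * (∑ i : Fin m, X i ^ 2) * (∑ i : Fin m, pderiv i P * pderiv i Q)
        - C ((2:ℝ) * k * ((m:ℝ) + 2 * k - 2)) * (P * Q) := by
  have hEP : ∑ i : Fin m, X i * pderiv i P = C ((k:ℝ)) * P := euler hPhom
  have hEQ : ∑ i : Fin m, X i * pderiv i Q = C ((k:ℝ)) * Q := euler hQhom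
  have : ∀ i j : Fin m, LL i j (P * LL i j Q)
      = LL i j P * LL i j Q + P * LL i j (LL i j Q) := by
    intro i j; rw [LL_mul]
  simp only [this, Finset.sum_add_distrib, ← Finset.mul_sum]
  rw [claim1 P Q, claim2 Q hQhom hQharm, hEP, hEQ]
  simp only [map_mul, map_sub, map_add, map_ofNat, map_natCast]
  ring



variable {n : ℕ}

/-- identity map into Euclidean space, Lipschitz from sup metric. -/
noncomputable def toE (n : ℕ) : (Fin n → ℝ) → EuclideanSpace ℝ (Fin n) :=
  (WithLp.equiv (2:ℝ≥0∞) (Fin n → ℝ)).symm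

lemma lipschitz_toE : LipschitzWith ((n : ℝ≥0) ^ (2:ℝ)⁻¹) (toE n) := by
  intro x y
  have h := PiLp.antilipschitzWith_ofLp 2 (fun _ : Fin n => ℝ) ((toE n x)) ((toE n y))
  simpa [toE, Fintype.card_fin, ENNReal.coe_rpow_of_nonneg, one_div] using h

lemma coord_le_norm (x : EuclideanSpace ℝ (Fin (n+1))) (i : Fin (n+1)) : |x i| ≤ ‖x‖ := by
  rw [EuclideanSpace.norm_eq, ← Real.sqrt_sq_eq_abs]
  apply Real.sqrt_le_sqrt
  simp only [Real.norm_eq_abs, sq_abs]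
  exact Finset.single_le_sum (f := fun l => x l ^ 2) (fun l _ => sq_nonneg _) (mem_univ i)

/-- the radial retraction onto the sphere is Lipschitz away from the origin -/
lemma lipschitzOn_normalize :
    LipschitzOnWith 2 (fun x : EuclideanSpace ℝ (Fin (n+1)) => ‖x‖⁻¹ • x)
      {x | 1 ≤ ‖x‖} := by
  rw [lipschitzOnWith_iff_dist_le_mul]
  intro x hx y hy
  have h20 : ((2:ℝ≥0):ℝ) = 2 := by norm_num
  rw [h20]
  simp only [Set.mem_setOf_eq] at hx hy
  have hx0 : ‖x‖ ≠ 0 := by positivity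
  have hy0 : ‖y‖ ≠ 0 := by positivity
  rw [dist_eq_norm]
  have key : ‖x‖⁻¹ • x - ‖y‖⁻¹ • y = ‖x‖⁻¹ • (x - y) + (‖x‖⁻¹ - ‖y‖⁻¹) • y := by
    rw [smul_sub, sub_smul]; abel
  rw [key]
  have h1 : ‖(‖x‖⁻¹ : ℝ) • (x - y)‖ ≤ ‖x - y‖ := by
    rw [norm_smul, Real.norm_eq_abs, abs_inv, abs_norm]
    calc ‖x‖⁻¹ * ‖x - y‖ ≤ 1 * ‖x - y‖ := by
          apply mul_le_mul_of_nonneg_right _ (norm_nonneg _)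
          exact inv_le_one_of_one_le₀ hx
      _ = ‖x - y‖ := one_mul _
  have h2 : ‖((‖x‖⁻¹ - ‖y‖⁻¹ : ℝ)) • y‖ ≤ ‖x - y‖ := by
    rw [norm_smul, Real.norm_eq_abs]
    have : ‖x‖⁻¹ - ‖y‖⁻¹ = (‖y‖ - ‖x‖) / (‖x‖ * ‖y‖) := by
      field_simp
    have hnum : |‖y‖ - ‖x‖| ≤ ‖x - y‖ := by
      rw [abs_sub_comm]
      exact abs_norm_sub_norm_le x y
    have hden : |‖x‖ * ‖y‖| = ‖x‖ * ‖y‖ := abs_of_nonneg (by positivity)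
    rw [this, abs_div, hden]
    have e2 : |‖y‖ - ‖x‖| / (‖x‖ * ‖y‖) * ‖y‖ = |‖y‖ - ‖x‖| / ‖x‖ := by
      field_simp
    rw [e2]
    calc |‖y‖ - ‖x‖| / ‖x‖ ≤ |‖y‖ - ‖x‖| := div_le_self (abs_nonneg _) hx
      _ ≤ ‖x - y‖ := hnum
  calc ‖(‖x‖⁻¹:ℝ) • (x - y) + ((‖x‖⁻¹ - ‖y‖⁻¹:ℝ)) • y‖
      ≤ ‖(‖x‖⁻¹:ℝ) • (x - y)‖ + ‖((‖x‖⁻¹ - ‖y‖⁻¹:ℝ)) • y‖ := norm_add_le _ _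
    _ ≤ ‖x - y‖ + ‖x - y‖ := add_le_add h1 h2
    _ = 2 * ‖x - y‖ := by ring
    _ = 2 * dist x y := by rw [dist_eq_norm]



noncomputable def phi (n : ℕ) : (Fin (n+1) → ℝ) → EuclideanSpace ℝ (Fin (n+1)) :=
  fun y => ‖toE (n+1) y‖⁻¹ • toE (n+1) y

noncomputable def faceMap (i : Fin (n+1)) (c : ℝ) : (Fin n → ℝ) → (Fin (n+1) → ℝ) :=
  fun y => Fin.insertNth i c y

lemma lipschitz_faceMap (i : Fin (n+1)) (c : ℝ) : LipschitzWith 1 (faceMap i c) := by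
  rw [lipschitzWith_iff_dist_le_mul]
  intro y z
  rw [NNReal.coe_one, one_mul]
  rw [dist_pi_le_iff dist_nonneg]
  intro l
  refine Fin.succAboveCases i ?_ (fun j => ?_) l
  · simp only [faceMap, Fin.insertNth_apply_same]
    simpa using dist_nonneg
  · simp only [faceMap, Fin.insertNth_apply_succAbove]
    exact dist_le_pi_dist y z j

lemma measure_ball_pi_lt_top :
    (Measure.hausdorffMeasure ((n:ℝ)) : Measure (Fin n → ℝ)) (closedBall 0 1) < ⊤ := by
  have hcast : ((n:ℝ)) = ((Fintype.card (Fin n) : ℕ) : ℝ) := by simp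
  rw [hcast, hausdorffMeasure_pi_real]
  exact (isCompact_closedBall _ _).measure_lt_top

lemma measure_phi_face_lt_top (i : Fin (n+1)) (c : ℝ) (hc : |c| = 1) :
    (Measure.hausdorffMeasure ((n:ℝ)) : Measure (EuclideanSpace ℝ (Fin (n+1))))
      (phi n '' (faceMap i c '' closedBall 0 1)) < ⊤ := by
  have hn : (0:ℝ) ≤ n := Nat.cast_nonneg n
  have hmaps : Set.MapsTo (toE (n+1)) (faceMap i c '' closedBall 0 1)
      {x : EuclideanSpace ℝ (Fin (n+1)) | 1 ≤ ‖x‖} := by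
    rintro y ⟨z, _, rfl⟩
    have h1 : |toE (n+1) (faceMap i c z) i| ≤ ‖toE (n+1) (faceMap i c z)‖ :=
      coord_le_norm _ i
    have he : toE (n+1) (faceMap i c z) i = c := by
      simp [toE, faceMap, Fin.insertNth_apply_same]
    rw [he, hc] at h1
    exact h1
  have hphi : LipschitzOnWith (2 * ((n+1 : ℝ≥0) ^ (2:ℝ)⁻¹)) (phi n)
      (faceMap i c '' closedBall 0 1) := by
    have := (lipschitzOn_normalize (n := n)).comp
      ((lipschitz_toE (n := n+1)).lipschitzOnWith
        (s := faceMap i c '' closedBall 0 1)) hmaps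
    rw [show phi n = (fun x => ‖x‖⁻¹ • x) ∘ toE (n+1) from rfl]
    simpa using this
  have h2 := hphi.hausdorffMeasure_image_le hn
  have h3 := (lipschitz_faceMap i c).hausdorffMeasure_image_le hn (closedBall 0 1)
  calc (Measure.hausdorffMeasure ((n:ℝ)) : Measure (EuclideanSpace ℝ (Fin (n+1))))
        (phi n '' (faceMap i c '' closedBall 0 1))
      ≤ ((2 * ((n+1 : ℝ≥0) ^ (2:ℝ)⁻¹) : ℝ≥0) : ℝ≥0∞) ^ (n:ℝ) *
          (Measure.hausdorffMeasure ((n:ℝ)) : Measure (Fin (n+1) → ℝ))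
            (faceMap i c '' closedBall 0 1) := h2
    _ ≤ ((2 * ((n+1 : ℝ≥0) ^ (2:ℝ)⁻¹) : ℝ≥0) : ℝ≥0∞) ^ (n:ℝ) *
          (((1:ℝ≥0) : ℝ≥0∞) ^ (n:ℝ) *
            (Measure.hausdorffMeasure ((n:ℝ)) : Measure (Fin n → ℝ)) (closedBall 0 1)) := by
        gcongr
    _ < ⊤ := by
        refine ENNReal.mul_lt_top ?_ (ENNReal.mul_lt_top ?_ measure_ball_pi_lt_top)
        · exact ENNReal.rpow_lt_top_of_nonneg hn ENNReal.coe_ne_top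
        · exact ENNReal.rpow_lt_top_of_nonneg hn ENNReal.coe_ne_top

lemma sphere_subset_cover :
    sphere (0 : EuclideanSpace ℝ (Fin (n+1))) 1 ⊆
      ⋃ (p : Fin (n+1) × Bool),
        phi n '' (faceMap p.1 (cond p.2 1 (-1)) '' closedBall 0 1) := by
  intro x hx
  rw [mem_sphere_zero_iff_norm] at hx
  obtain ⟨i, -, hi⟩ := Finset.exists_max_image Finset.univ (fun l => |x l|) ⟨0, mem_univ 0⟩
  have hi' : ∀ l, |x l| ≤ |x i| := fun l => hi l (mem_univ l)
  have hxne : x ≠ 0 := by intro h; rw [h, norm_zero] at hx; norm_num at hx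
  have hipos : 0 < |x i| := by
    rcases (abs_nonneg (x i)).lt_or_eq with h | h
    · exact h
    · exfalso
      apply hxne
      ext l
      exact abs_nonpos_iff.mp (h ▸ hi' l)
  set b : Bool := decide (0 ≤ x i) with hb
  set c : ℝ := cond b 1 (-1) with hcdef
  set y : Fin (n+1) → ℝ := fun l => x l / |x i| with hy
  have hyc : y i = c := by
    rcases le_or_gt 0 (x i) with h | h
    · have hx0 : 0 < x i := by rwa [abs_of_nonneg h] at hipos
      have : y i = 1 := by
        simp only [hy]
        rw [abs_of_nonneg h, div_self (ne_of_gt hx0)]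
      rw [this, hcdef, hb]
      simp [h]
    · have : y i = -1 := by
        simp only [hy]
        rw [abs_of_neg h, div_neg_eq_neg_div, div_self (ne_of_lt h)]
      rw [this, hcdef, hb]
      simp [not_le.mpr h]
  refine Set.mem_iUnion.mpr ⟨⟨i, b⟩, ?_⟩
  refine ⟨y, ⟨Fin.removeNth i y, ?_, ?_⟩, ?_⟩
  · rw [mem_closedBall]
    rw [dist_pi_le_iff zero_le_one]
    intro j
    simp only [Fin.removeNth, Pi.zero_apply, Real.dist_eq, sub_zero, hy]
    rw [abs_div, abs_abs]
    exact div_le_one_of_le₀ (hi' _) (abs_nonneg _)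
  · show faceMap i c (Fin.removeNth i y) = y
    simp only [faceMap]
    rw [← hyc, Fin.insertNth_removeNth, Function.update_eq_self]
  · show phi n y = x
    have htoE : toE (n+1) y = |x i|⁻¹ • x := by
      ext l
      simp only [toE, hy]
      show x l / |x i| = (|x i|⁻¹ • x) l
      simp [div_eq_inv_mul]
    have hnorm : ‖toE (n+1) y‖ = |x i|⁻¹ := by
      rw [htoE, norm_smul, hx, mul_one, Real.norm_eq_abs, abs_inv, abs_abs]
    simp only [phi]
    rw [hnorm, htoE, smul_smul, inv_inv, mul_inv_cancel₀ (ne_of_gt hipos), one_smul]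

theorem sphere_hausdorff_lt_top (n : ℕ) :
    (Measure.hausdorffMeasure ((n:ℝ)) : Measure (EuclideanSpace ℝ (Fin (n+1))))
      (sphere 0 1) < ⊤ := by
  apply lt_of_le_of_lt (measure_mono sphere_subset_cover)
  apply lt_of_le_of_lt (measure_iUnion_le _)
  rw [tsum_fintype]
  refine ENNReal.sum_lt_top.mpr fun p _ => ?_
  apply measure_phi_face_lt_top
  rcases p with ⟨i, b⟩
  cases b <;> simp


variable {m : ℕ}

/-- rotation in the (i,j) coordinate plane -/
noncomputable def rotFun (i j : Fin m) (θ : ℝ) (x : Fin m → ℝ) : Fin m → ℝ :=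
  fun l => if l = i then cos θ * x i - sin θ * x j
    else if l = j then sin θ * x i + cos θ * x j else x l

lemma sum_split {M : Type*} [AddCommMonoid M] (i j : Fin m) (hij : i ≠ j) (g : Fin m → M) :
    ∑ l, g l = g i + g j + ∑ l ∈ univ \ {i, j}, g l := by
  rw [← Finset.sum_sdiff (Finset.subset_univ {i, j}), Finset.sum_pair hij]
  abel

lemma rotFun_apply_ne (i j : Fin m) (θ : ℝ) (x : Fin m → ℝ) {l : Fin m}
    (hli : l ≠ i) (hlj : l ≠ j) : rotFun i j θ x l = x l := by
  simp [rotFun, hli, hlj]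

lemma sum_sq_rotFun (i j : Fin m) (hij : i ≠ j) (θ : ℝ) (x : Fin m → ℝ) :
    ∑ l, (rotFun i j θ x l) ^ 2 = ∑ l, (x l) ^ 2 := by
  rw [sum_split i j hij, sum_split i j hij (fun l => (x l)^2)]
  have h1 : rotFun i j θ x i = cos θ * x i - sin θ * x j := by simp [rotFun]
  have h2 : rotFun i j θ x j = sin θ * x i + cos θ * x j := by
    simp [rotFun, hij.symm]
  rw [h1, h2]
  have h3 : ∑ l ∈ univ \ {i, j}, (rotFun i j θ x l)^2 = ∑ l ∈ univ \ {i, j}, (x l)^2 := by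
    refine Finset.sum_congr rfl fun l hl => ?_
    simp only [Finset.mem_sdiff, Finset.mem_insert, Finset.mem_singleton, not_or] at hl
    rw [rotFun_apply_ne i j θ x hl.2.1 hl.2.2]
  rw [h3]
  have := sin_sq_add_cos_sq θ
  nlinarith [this]

lemma rotFun_sub (i j : Fin m) (θ : ℝ) (x y : Fin m → ℝ) (l : Fin m) :
    rotFun i j θ x l - rotFun i j θ y l = rotFun i j θ (fun l => x l - y l) l := by
  simp only [rotFun]
  split_ifs <;> ring

lemma rotFun_invol (i j : Fin m) (hij : i ≠ j) (θ : ℝ) (x : Fin m → ℝ) :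
    rotFun i j (-θ) (rotFun i j θ x) = x := by
  funext l
  rcases eq_or_ne l i with rfl | hli
  · simp only [rotFun, if_pos rfl, if_neg hij, if_neg hij.symm, cos_neg, sin_neg, if_true, eq_self_iff_true]
    linear_combination x l * sin_sq_add_cos_sq θ
  · rcases eq_or_ne l j with rfl | hlj
    · simp only [rotFun, if_neg hij.symm, if_pos rfl, cos_neg, sin_neg, if_true, eq_self_iff_true]
      linear_combination x l * sin_sq_add_cos_sq θ
    · simp [rotFun, hli, hlj]

/-- Rotation as an isometry equivalence of Euclidean space. -/
noncomputable def rotIso (i j : Fin m) (hij : i ≠ j) (θ : ℝ) :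
    EuclideanSpace ℝ (Fin m) ≃ᵢ EuclideanSpace ℝ (Fin m) where
  toFun x := WithLp.toLp 2 (rotFun i j θ (fun l => x l))
  invFun x := WithLp.toLp 2 (rotFun i j (-θ) (fun l => x l))
  left_inv x := by
    show (WithLp.toLp 2 (rotFun i j (-θ) (rotFun i j θ (fun l => x l))) : EuclideanSpace ℝ (Fin m)) = x
    rw [rotFun_invol i j hij θ]
  right_inv x := by
    show (WithLp.toLp 2 (rotFun i j θ (rotFun i j (-θ) (fun l => x l))) : EuclideanSpace ℝ (Fin m)) = x
    have := rotFun_invol i j hij (-θ) (fun l => x l)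
    rw [neg_neg] at this
    rw [this]
  isometry_toFun := by
    apply Isometry.of_dist_eq
    intro x y
    rw [EuclideanSpace.dist_eq, EuclideanSpace.dist_eq]
    congr 1
    simp only [Real.dist_eq, sq_abs, WithLp.ofLp_toLp]
    have : ∀ l, rotFun i j θ (fun l => x l) l - rotFun i j θ (fun l => y l) l
        = rotFun i j θ (fun l => x l - y l) l := fun l => rotFun_sub i j θ _ _ l
    simp only [this]
    exact sum_sq_rotFun i j hij θ _


lemma rotIso_zero_fixed (i j : Fin m) (hij : i ≠ j) (θ : ℝ) :
    rotIso i j hij θ 0 = 0 := by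
  show (WithLp.toLp 2 (rotFun i j θ (fun l => (0 : EuclideanSpace ℝ (Fin m)) l)) : EuclideanSpace ℝ (Fin m)) = 0
  ext l
  show rotFun i j θ (fun l => (0 : EuclideanSpace ℝ (Fin m)) l) l = 0
  simp only [rotFun]
  split_ifs <;> simp

lemma rotIso_preimage_sphere (i j : Fin m) (hij : i ≠ j) (θ : ℝ) :
    (rotIso i j hij θ) ⁻¹' (sphere (0 : EuclideanSpace ℝ (Fin m)) 1) = sphere 0 1 := by
  ext x
  simp only [Set.mem_preimage, mem_sphere]
  have key : dist ((rotIso i j hij θ) x) 0 = dist x 0 := by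
    conv_lhs => rw [← rotIso_zero_fixed i j hij θ]
    exact (rotIso i j hij θ).isometry.dist_eq _ _
  rw [key]

lemma map_restrict_sphere (i j : Fin m) (hij : i ≠ j) (θ : ℝ) :
    Measure.map (rotIso i j hij θ)
      ((Measure.hausdorffMeasure ((m:ℝ) - 1) : Measure (EuclideanSpace ℝ (Fin m))).restrict
        (sphere 0 1))
      = (Measure.hausdorffMeasure ((m:ℝ) - 1)).restrict (sphere 0 1) := by
  have hmeas : Measurable (rotIso i j hij θ) :=
    (rotIso i j hij θ).isometry.continuous.measurable
  have hS : MeasurableSet (sphere (0 : EuclideanSpace ℝ (Fin m)) 1) :=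
    isClosed_sphere.measurableSet
  conv_lhs => rw [← rotIso_preimage_sphere i j hij θ]
  rw [← Measure.restrict_map hmeas hS]
  rw [(rotIso i j hij θ).map_hausdorffMeasure]

lemma continuous_evalPoly (F : MvPolynomial (Fin m) ℝ) :
    Continuous fun x : EuclideanSpace ℝ (Fin m) => eval (fun l => x l) F := by
  induction F using MvPolynomial.induction_on with
  | C a => simp only [eval_C]; exact continuous_const
  | add p q hp hq => simp only [map_add]; exact hp.add hq
  | mul_X p l hp =>
    simp only [map_mul, eval_X]
    exact hp.mul (PiLp.continuous_apply 2 _ l)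

lemma hasDerivAt_evalPoly (F : MvPolynomial (Fin m) ℝ) (c : ℝ → Fin m → ℝ)
    (c' : Fin m → ℝ) (θ : ℝ) (hc : ∀ l, HasDerivAt (fun t => c t l) (c' l) θ) :
    HasDerivAt (fun t => eval (c t) F) (∑ l, eval (c θ) (pderiv l F) * c' l) θ := by
  induction F using MvPolynomial.induction_on with
  | C a =>
    simp only [eval_C, pderiv_C]
    simpa using hasDerivAt_const θ (a : ℝ)
  | add p q hp hq =>
    simp only [map_add]
    have := hp.add hq
    refine this.congr_deriv (Eq.symm ?_)
    rw [← Finset.sum_add_distrib]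
    exact Finset.sum_congr rfl fun l _ => by ring
  | mul_X p l hp =>
    simp only [map_mul, eval_X]
    have := hp.mul (hc l)
    refine this.congr_deriv (Eq.symm ?_)
    have hexp : ∀ b : Fin m, eval (c θ) (pderiv b (p * X l)) * c' b
        = (eval (c θ) (pderiv b p) * c' b) * c θ l
          + eval (c θ) p * (if b = l then c' b else 0) := by
      intro b
      rw [pderiv_mul, pderiv_X]
      rcases eq_or_ne b l with rfl | hbl
      · simp only [Pi.single_eq_same, if_pos rfl]
        simp [eval_mul, eval_X]
        ring
      · rw [Pi.single_eq_of_ne (Ne.symm hbl), if_neg hbl]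
        simp [eval_mul, eval_X]
        ring
    simp only [hexp, Finset.sum_add_distrib, ← Finset.sum_mul]
    congr 1
    rw [Finset.sum_eq_single l]
    · simp
    · intro b _ hb; simp [hb]
    · simp


lemma rotFun_zero (i j : Fin m) (u : Fin m → ℝ) : rotFun i j 0 u = u := by
  funext l
  simp only [rotFun, Real.cos_zero, Real.sin_zero]
  split_ifs with h1 h2 <;> simp_all

lemma continuous_evalPoly' {X : Type*} [TopologicalSpace X] (F : MvPolynomial (Fin m) ℝ)
    (c : X → Fin m → ℝ) (hc : ∀ l, Continuous fun p => c p l) :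
    Continuous fun p => eval (c p) F := by
  induction F using MvPolynomial.induction_on with
  | C a => simp only [eval_C]; exact continuous_const
  | add p q hp hq => simp only [map_add]; exact hp.add hq
  | mul_X p l hp =>
    simp only [map_mul, eval_X]
    exact hp.mul (hc l)

lemma integrable_cont {d : ℝ}
    (hfin : (Measure.hausdorffMeasure d : Measure (EuclideanSpace ℝ (Fin m)))
      (sphere 0 1) < ⊤)
    (f : EuclideanSpace ℝ (Fin m) → ℝ) (hf : Continuous f) :
    Integrable f ((Measure.hausdorffMeasure d).restrict (sphere 0 1)) := by
  have hS : MeasurableSet (sphere (0 : EuclideanSpace ℝ (Fin m)) 1) :=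
    isClosed_sphere.measurableSet
  haveI : IsFiniteMeasure
      ((Measure.hausdorffMeasure d : Measure (EuclideanSpace ℝ (Fin m))).restrict
        (sphere 0 1)) := by
    constructor
    rwa [Measure.restrict_apply_univ]
  obtain ⟨C, hC⟩ := (isCompact_sphere (0 : EuclideanSpace ℝ (Fin m)) 1).exists_bound_of_continuousOn
    hf.continuousOn
  refine Integrable.mono' (integrable_const C) hf.aestronglyMeasurable ?_
  exact (ae_restrict_mem hS).mono fun x hx => hC x hx

lemma integral_rot_eq {i j : Fin m} (hij : i ≠ j) (θ : ℝ)
    (f : EuclideanSpace ℝ (Fin m) → ℝ) (hf : Continuous f) :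
    ∫ x in sphere (0 : EuclideanSpace ℝ (Fin m)) 1, f (rotIso i j hij θ x)
        ∂(Measure.hausdorffMeasure ((m:ℝ) - 1))
      = ∫ x in sphere (0 : EuclideanSpace ℝ (Fin m)) 1, f x
        ∂(Measure.hausdorffMeasure ((m:ℝ) - 1)) := by
  conv_rhs => rw [← map_restrict_sphere i j hij θ]
  rw [integral_map ((rotIso i j hij θ).isometry.continuous.measurable).aemeasurable
    hf.aestronglyMeasurable]

lemma setIntegral_LL_eval_zero
    (hfin : (Measure.hausdorffMeasure ((m:ℝ) - 1) : Measure (EuclideanSpace ℝ (Fin m)))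
      (sphere 0 1) < ⊤)
    (F : MvPolynomial (Fin m) ℝ) (i j : Fin m) :
    ∫ x in sphere (0 : EuclideanSpace ℝ (Fin m)) 1,
        eval (fun l => x l) (X i * pderiv j F - X j * pderiv i F)
        ∂(Measure.hausdorffMeasure ((m:ℝ) - 1)) = 0 := by
  rcases eq_or_ne i j with rfl | hij
  · simp only [sub_self, map_zero]
    exact integral_zero _ _
  set μ := (Measure.hausdorffMeasure ((m:ℝ) - 1) :
      Measure (EuclideanSpace ℝ (Fin m))).restrict (sphere 0 1) with hμ
  haveI : IsFiniteMeasure μ := by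
    constructor
    rw [hμ, Measure.restrict_apply_univ]
    exact hfin
  have hS : MeasurableSet (sphere (0 : EuclideanSpace ℝ (Fin m)) 1) :=
    isClosed_sphere.measurableSet
  set Fn : ℝ → EuclideanSpace ℝ (Fin m) → ℝ :=
    fun t x => eval (rotFun i j t (fun l => x l)) F with hFn
  set rotD : ℝ → (Fin m → ℝ) → Fin m → ℝ := fun t u l =>
    if l = i then -Real.sin t * u i - Real.cos t * u j
    else if l = j then Real.cos t * u i - Real.sin t * u j else 0 with hrotD
  set Fn' : ℝ → EuclideanSpace ℝ (Fin m) → ℝ :=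
    fun t x => ∑ l, eval (rotFun i j t (fun l => x l)) (pderiv l F)
      * rotD t (fun l => x l) l with hFn'
  -- continuity of Fn t for fixed t
  have hFnc : ∀ t, Continuous (Fn t) := by
    intro t
    apply continuous_evalPoly'
    intro l
    simp only [rotFun]
    split_ifs
    · exact ((continuous_const.mul (PiLp.continuous_apply 2 _ i)).sub
        (continuous_const.mul (PiLp.continuous_apply 2 _ j)))
    · exact ((continuous_const.mul (PiLp.continuous_apply 2 _ i)).add
        (continuous_const.mul (PiLp.continuous_apply 2 _ j)))
    · exact PiLp.continuous_apply 2 _ l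
  -- continuity of (t, x) ↦ Fn' t x
  have hGc : Continuous (fun p : ℝ × EuclideanSpace ℝ (Fin m) => Fn' p.1 p.2) := by
    apply continuous_finset_sum
    intro l _
    apply Continuous.mul
    · apply continuous_evalPoly'
      intro l'
      simp only [rotFun]
      split_ifs
      · exact ((Real.continuous_cos.comp continuous_fst).mul
          ((PiLp.continuous_apply 2 _ i).comp continuous_snd)).sub
          ((Real.continuous_sin.comp continuous_fst).mul
          ((PiLp.continuous_apply 2 _ j).comp continuous_snd))
      · exact ((Real.continuous_sin.comp continuous_fst).mul
          ((PiLp.continuous_apply 2 _ i).comp continuous_snd)).add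
          ((Real.continuous_cos.comp continuous_fst).mul
          ((PiLp.continuous_apply 2 _ j).comp continuous_snd))
      · exact (PiLp.continuous_apply 2 _ l').comp continuous_snd
    · simp only [hrotD]
      split_ifs
      · exact ((Real.continuous_sin.comp continuous_fst).neg.mul
          ((PiLp.continuous_apply 2 _ i).comp continuous_snd)).sub
          ((Real.continuous_cos.comp continuous_fst).mul
          ((PiLp.continuous_apply 2 _ j).comp continuous_snd))
      · exact ((Real.continuous_cos.comp continuous_fst).mul
          ((PiLp.continuous_apply 2 _ i).comp continuous_snd)).sub
          ((Real.continuous_sin.comp continuous_fst).mul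
          ((PiLp.continuous_apply 2 _ j).comp continuous_snd))
      · exact continuous_const
  -- the bound
  obtain ⟨C, hC⟩ := ((isCompact_closedBall (0:ℝ) 1).prod
    (isCompact_sphere (0 : EuclideanSpace ℝ (Fin m)) 1)).exists_bound_of_continuousOn
    hGc.continuousOn
  -- derivative of Fn in t
  have h_diff : ∀ x : EuclideanSpace ℝ (Fin m), ∀ t : ℝ,
      HasDerivAt (fun t => Fn t x) (Fn' t x) t := by
    intro x t
    apply hasDerivAt_evalPoly F (fun t => rotFun i j t (fun l => x l))
      (rotD t (fun l => x l)) t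
    intro l
    rcases eq_or_ne l i with rfl | hli
    · simp only [rotFun, if_pos rfl, hrotD, eq_self_iff_true, if_true]
      exact ((Real.hasDerivAt_cos t).mul_const (x l)).sub
        ((Real.hasDerivAt_sin t).mul_const (x j))
    · rcases eq_or_ne l j with rfl | hlj
      · simp only [rotFun, if_neg hli, if_pos rfl, hrotD, eq_self_iff_true, if_true]
        have h := ((Real.hasDerivAt_sin t).mul_const (x i)).add
          ((Real.hasDerivAt_cos t).mul_const (x l))
        refine h.congr_deriv (Eq.symm ?_)
        ring
      · simp only [rotFun, if_neg hli, if_neg hlj, hrotD]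
        exact hasDerivAt_const t (x l)
  -- value of Fn' at 0
  have hF'0 : ∀ x : EuclideanSpace ℝ (Fin m), Fn' 0 x
      = eval (fun l => x l) (X i * pderiv j F - X j * pderiv i F) := by
    intro x
    simp only [hFn', rotFun_zero, hrotD, Real.sin_zero, Real.cos_zero]
    have hterm : ∀ l : Fin m, eval (fun l => x l) (pderiv l F) *
        (if l = i then -0 * x i - 1 * x j
         else if l = j then 1 * x i - 0 * x j else 0)
        = (if l = i then eval (fun l => x l) (pderiv i F) * (- x j) else 0)
          + (if l = j then eval (fun l => x l) (pderiv j F) * (x i) else 0) := by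
      intro l
      rcases eq_or_ne l i with rfl | hli
      · rw [if_pos rfl, if_pos rfl, if_neg hij]
        ring
      · rcases eq_or_ne l j with rfl | hlj
        · rw [if_neg hli, if_pos rfl, if_neg hli, if_pos rfl]
          ring
        · rw [if_neg hli, if_neg hlj, if_neg hli, if_neg hlj]
          ring
    rw [Finset.sum_congr rfl fun l _ => hterm l]
    rw [Finset.sum_add_distrib, Finset.sum_ite_eq' Finset.univ i,
      Finset.sum_ite_eq' Finset.univ j]
    simp only [Finset.mem_univ, if_pos]
    simp only [eval_sub, eval_mul, eval_X]
    ring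
  -- apply dominated differentiation
  have hmain := hasDerivAt_integral_of_dominated_loc_of_deriv_le
    (F := Fn) (F' := Fn') (x₀ := (0:ℝ)) (μ := μ) (bound := fun _ => C)
    (s := ball (0:ℝ) 1) (ball_mem_nhds 0 one_pos)
    (Filter.Eventually.of_forall fun t => (hFnc t).aestronglyMeasurable)
    (integrable_cont hfin _ (by
      have : Fn 0 = fun x => eval (fun l => x l) F := by
        funext x; simp only [hFn, rotFun_zero]
      rw [this]
      exact continuous_evalPoly F))
    (by
      have : Continuous (Fn' 0) := by
        have := hGc.comp (Continuous.prodMk_right (0:ℝ))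
        exact this
      exact this.aestronglyMeasurable)
    ((ae_restrict_mem hS).mono (fun x hx t ht => by
      have hball : (t, x) ∈ closedBall (0:ℝ) 1 ×ˢ sphere (0 : EuclideanSpace ℝ (Fin m)) 1 :=
        ⟨ball_subset_closedBall ht, hx⟩
      exact hC (t, x) hball))
    (integrable_const C)
    ((ae_restrict_mem hS).mono (fun x hx t _ => h_diff x t))
  obtain ⟨-, hderiv⟩ := hmain
  -- the integral is constant in t
  have hconst : (fun t => ∫ x, Fn t x ∂μ) = fun _ => ∫ x, Fn 0 x ∂μ := by
    funext t
    have h1 : ∀ s : ℝ, ∫ x, Fn s x ∂μ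
        = ∫ x in sphere (0 : EuclideanSpace ℝ (Fin m)) 1,
            (fun y => eval (fun l => y l) F) (rotIso i j hij s x)
            ∂(Measure.hausdorffMeasure ((m:ℝ) - 1)) := by
      intro s
      rfl
    rw [h1 t, h1 0]
    rw [integral_rot_eq hij t _ (continuous_evalPoly F),
      integral_rot_eq hij 0 _ (continuous_evalPoly F)]
  have hzero : HasDerivAt (fun t => ∫ x, Fn t x ∂μ) 0 0 := by
    rw [hconst]
    exact hasDerivAt_const _ _
  have hzeq := hzero.unique hderiv
  have hgoal : ∫ x, eval (fun l => x l) (X i * pderiv j F - X j * pderiv i F) ∂μ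
      = ∫ x, Fn' 0 x ∂μ :=
    integral_congr_ae (Filter.Eventually.of_forall fun x => (hF'0 x).symm)
  exact hgoal.trans hzeq.symm


end Stmt11Aux

open Stmt11Aux

/-- For harmonic polynomials `p, q` on `ℝ^m`, homogeneous of degree `k`,
`∫_{S^{m-1}} ∇p · ∇q dH^{m-1} = k(m + 2k − 2) ∫_{S^{m-1}} p q dH^{m-1}`. -/
theorem stmt11 (m k : ℕ) (hm : 1 ≤ m)
    (P Q : MvPolynomial (Fin m) ℝ)
    (hPhom : P.IsHomogeneous k) (hQhom : Q.IsHomogeneous k)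
    (hPharm : ∑ i : Fin m, pderiv i (pderiv i P) = 0)
    (hQharm : ∑ i : Fin m, pderiv i (pderiv i Q) = 0) :
    (∫ x in sphere (0 : EuclideanSpace ℝ (Fin m)) 1,
        ∑ i : Fin m,
          eval (fun j => x j) (pderiv i P) * eval (fun j => x j) (pderiv i Q)
        ∂(Measure.hausdorffMeasure ((m : ℝ) - 1)))
      = (k : ℝ) * ((m : ℝ) + 2 * k - 2) *
        ∫ x in sphere (0 : EuclideanSpace ℝ (Fin m)) 1,
          eval (fun j => x j) P * eval (fun j => x j) Q
          ∂(Measure.hausdorffMeasure ((m : ℝ) - 1)) := by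
  obtain ⟨n, rfl⟩ : ∃ n, m = n + 1 := ⟨m - 1, (Nat.succ_pred_eq_of_pos hm).symm⟩
  have hfin : (Measure.hausdorffMeasure (((n+1 : ℕ) : ℝ) - 1) :
      Measure (EuclideanSpace ℝ (Fin (n+1)))) (sphere 0 1) < ⊤ := by
    have h := sphere_hausdorff_lt_top n
    have hcast : ((n:ℝ)) = ((n+1 : ℕ) : ℝ) - 1 := by push_cast; ring
    rwa [hcast] at h
  have hS : MeasurableSet (sphere (0 : EuclideanSpace ℝ (Fin (n+1))) 1) :=
    isClosed_sphere.measurableSet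
  have hint : ∀ F : MvPolynomial (Fin (n+1)) ℝ,
      Integrable (fun x : EuclideanSpace ℝ (Fin (n+1)) => eval (fun l => x l) F)
        ((Measure.hausdorffMeasure (((n+1 : ℕ) : ℝ) - 1)).restrict (sphere 0 1)) :=
    fun F => integrable_cont hfin _ (continuous_evalPoly F)
  -- the integral of the master identity's LHS vanishes
  have h0 : ∫ x in sphere (0 : EuclideanSpace ℝ (Fin (n+1))) 1,
      eval (fun l => x l) (∑ i : Fin (n+1), ∑ j : Fin (n+1), LL i j (P * LL i j Q))
      ∂(Measure.hausdorffMeasure (((n+1 : ℕ) : ℝ) - 1)) = 0 := by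
    have hrw : ∀ x : EuclideanSpace ℝ (Fin (n+1)),
        eval (fun l => x l) (∑ i : Fin (n+1), ∑ j : Fin (n+1), LL i j (P * LL i j Q))
        = ∑ i : Fin (n+1), ∑ j : Fin (n+1), eval (fun l => x l) (LL i j (P * LL i j Q)) := by
      intro x
      rw [map_sum]
      exact Finset.sum_congr rfl fun i _ => by rw [map_sum]
    simp only [hrw]
    rw [integral_finset_sum _ (fun i _ => integrable_finset_sum _
      (fun j _ => hint (LL i j (P * LL i j Q))))]
    rw [Finset.sum_eq_zero]
    intro i _
    rw [integral_finset_sum _ (fun j _ => hint (LL i j (P * LL i j Q)))]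
    rw [Finset.sum_eq_zero]
    intro j _
    exact setIntegral_LL_eval_zero hfin (P * LL i j Q) i j
  -- evaluate the master identity
  have hmaster := master (m := n+1) P Q hPhom hQhom hQharm
  have hev : ∀ x : EuclideanSpace ℝ (Fin (n+1)),
      eval (fun l => x l) (∑ i : Fin (n+1), ∑ j : Fin (n+1), LL i j (P * LL i j Q))
      = 2 * (∑ l : Fin (n+1), (x l)^2) *
          (∑ i : Fin (n+1), eval (fun l => x l) (pderiv i P) * eval (fun l => x l) (pderiv i Q))
        - (2 * (k:ℝ) * (((n+1 : ℕ) : ℝ) + 2 * k - 2)) *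
          (eval (fun l => x l) P * eval (fun l => x l) Q) := by
    intro x
    rw [hmaster]
    simp [eval_sub, eval_mul, eval_C, map_ofNat, map_sum, eval_pow, eval_X]
  -- on the sphere, `∑ xₗ² = 1`
  have hsph : ∀ x ∈ sphere (0 : EuclideanSpace ℝ (Fin (n+1))) 1,
      ∑ l : Fin (n+1), (x l)^2 = 1 := by
    intro x hx
    rw [mem_sphere_zero_iff_norm] at hx
    have h := congrArg (fun r : ℝ => r ^ 2) hx
    simp only [one_pow] at h
    rw [EuclideanSpace.norm_eq] at h
    rw [Real.sq_sqrt (by positivity)] at h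
    simpa [Real.norm_eq_abs, sq_abs] using h
  -- putting it together
  have h1 : ∫ x in sphere (0 : EuclideanSpace ℝ (Fin (n+1))) 1,
      (2 * (∑ i : Fin (n+1), eval (fun l => x l) (pderiv i P) * eval (fun l => x l) (pderiv i Q))
        - (2 * (k:ℝ) * (((n+1 : ℕ) : ℝ) + 2 * k - 2)) *
            (eval (fun l => x l) P * eval (fun l => x l) Q))
      ∂(Measure.hausdorffMeasure (((n+1 : ℕ) : ℝ) - 1)) = 0 := by
    rw [← h0]
    apply setIntegral_congr_fun hS
    intro x hx
    show _ = eval (fun l => x l) (∑ i : Fin (n+1), ∑ j : Fin (n+1), LL i j (P * LL i j Q))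
    rw [hev x, hsph x hx]
    ring
  have hg : Integrable (fun x : EuclideanSpace ℝ (Fin (n+1)) =>
      ∑ i : Fin (n+1), eval (fun l => x l) (pderiv i P) * eval (fun l => x l) (pderiv i Q))
      ((Measure.hausdorffMeasure (((n+1 : ℕ) : ℝ) - 1)).restrict (sphere 0 1)) := by
    have h := hint (∑ i : Fin (n+1), pderiv i P * pderiv i Q)
    simp only [map_sum, map_mul] at h
    exact h
  have hpq : Integrable (fun x : EuclideanSpace ℝ (Fin (n+1)) =>
      eval (fun l => x l) P * eval (fun l => x l) Q)
      ((Measure.hausdorffMeasure (((n+1 : ℕ) : ℝ) - 1)).restrict (sphere 0 1)) := by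
    have h := hint (P * Q)
    simp only [map_mul] at h
    exact h
  rw [integral_sub (hg.const_mul 2) (hpq.const_mul _)] at h1
  have h2 : (∫ x in sphere (0 : EuclideanSpace ℝ (Fin (n+1))) 1,
      2 * (∑ i : Fin (n+1), eval (fun l => x l) (pderiv i P) * eval (fun l => x l) (pderiv i Q))
      ∂(Measure.hausdorffMeasure (((n+1 : ℕ) : ℝ) - 1)))
      = 2 * ∫ x in sphere (0 : EuclideanSpace ℝ (Fin (n+1))) 1,
          (∑ i : Fin (n+1), eval (fun l => x l) (pderiv i P) * eval (fun l => x l) (pderiv i Q))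
          ∂(Measure.hausdorffMeasure (((n+1 : ℕ) : ℝ) - 1)) := integral_const_mul _ _
  have h3 : (∫ x in sphere (0 : EuclideanSpace ℝ (Fin (n+1))) 1,
      (2 * (k:ℝ) * (((n+1 : ℕ) : ℝ) + 2 * k - 2)) *
        (eval (fun l => x l) P * eval (fun l => x l) Q)
      ∂(Measure.hausdorffMeasure (((n+1 : ℕ) : ℝ) - 1)))
      = (2 * (k:ℝ) * (((n+1 : ℕ) : ℝ) + 2 * k - 2)) *
        ∫ x in sphere (0 : EuclideanSpace ℝ (Fin (n+1))) 1,
          eval (fun l => x l) P * eval (fun l => x l) Q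
          ∂(Measure.hausdorffMeasure (((n+1 : ℕ) : ℝ) - 1)) := integral_const_mul _ _
  rw [h2, h3] at h1
  linarith
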